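/- For disjoint vertex subsets S and T with |S| ≥ 1 and |T| ≥ 2, the cut inequality −Σ_{i∈S} x_i − Σ_{ij∈E(S)} y_{ij} + Σ_{ij∈E(S:T)} y_{ij} − Σ_{ij∈E(T)} y_{ij} ≤ 0 holds for all binary x with y_{ij} = x_i x_j, where E(S) denotes the pairs within S and E(S:T) the pairs with one endpoint in each of S and T. -/
import Mathlib

lemma sq_sum_aux (n : ℕ) (x : Fin n → ℝ) (A : Finset (Fin n)) :
    (∑ i ∈ A, x i)^2 =
      2 * (∑ i ∈ A, ∑ j ∈ A, if i < j then x i * x j else 0) + ∑ i ∈ A, x i * x i := by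
  have key : ∀ i j : Fin n, x i * x j =
      (if i < j then x i * x j else 0) + (if j < i then x i * x j else 0)
        + (if i = j then x i * x j else 0) := by
    intro i j
    rcases lt_trichotomy i j with h | h | h
    · simp [h, asymm h, ne_of_lt h]
    · subst h; simp
    · simp [h, asymm h, (ne_of_lt h).symm]
  have hswap : (∑ i ∈ A, ∑ j ∈ A, if j < i then x i * x j else 0)
      = ∑ i ∈ A, ∑ j ∈ A, if i < j then x i * x j else 0 := by
    rw [Finset.sum_comm]
    refine Finset.sum_congr rfl fun i _ => Finset.sum_congr rfl fun j _ => ?_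
    rcases lt_or_ge i j with h | h
    · rw [if_pos h, if_pos h, mul_comm]
    · rw [if_neg (not_lt_of_ge h), if_neg (not_lt_of_ge h)]
  have hdiag : (∑ i ∈ A, ∑ j ∈ A, if i = j then x i * x j else 0)
      = ∑ i ∈ A, x i * x i := by
    refine Finset.sum_congr rfl fun i hi => ?_
    rw [Finset.sum_ite_eq, if_pos hi]
  calc (∑ i ∈ A, x i)^2 = ∑ i ∈ A, ∑ j ∈ A, x i * x j := by
        rw [sq, Finset.sum_mul_sum]
    _ = (∑ i ∈ A, ∑ j ∈ A, if i < j then x i * x j else 0)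
        + (∑ i ∈ A, ∑ j ∈ A, if j < i then x i * x j else 0)
        + (∑ i ∈ A, ∑ j ∈ A, if i = j then x i * x j else 0) := by
        simp_rw [← Finset.sum_add_distrib]
        exact Finset.sum_congr rfl fun i _ => Finset.sum_congr rfl fun j _ => key i j
    _ = 2 * (∑ i ∈ A, ∑ j ∈ A, if i < j then x i * x j else 0) + ∑ i ∈ A, x i * x i := by
        rw [hswap, hdiag]; ring

lemma sum_card_aux (n : ℕ) (x : Fin n → ℝ) (hx : ∀ a, x a = 0 ∨ x a = 1)
    (A : Finset (Fin n)) :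
    ∑ i ∈ A, x i = ((A.filter (fun i => x i = 1)).card : ℝ) := by
  rw [Finset.card_filter]
  push_cast
  refine Finset.sum_congr rfl fun i _ => ?_
  rcases hx i with h | h <;> simp [h]

/-- Padberg's cut inequality: for disjoint `S`, `T` with `|S| ≥ 1`, `|T| ≥ 2`,
`−∑_{i∈S} x_i − ∑_{i<j∈S} x_i x_j + ∑_{i∈S,j∈T} x_i x_j − ∑_{i<j∈T} x_i x_j ≤ 0`
holds at every binary point. -/
theorem stmt11 (n : ℕ) (S T : Finset (Fin n)) (hST : Disjoint S T)
    (hS : 1 ≤ S.card) (hT : 2 ≤ T.card)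
    (x : Fin n → ℝ) (hx : ∀ a, x a = 0 ∨ x a = 1) :
    -(∑ i ∈ S, x i) - (∑ i ∈ S, ∑ j ∈ S, if i < j then x i * x j else 0)
      + (∑ i ∈ S, ∑ j ∈ T, x i * x j)
      - (∑ i ∈ T, ∑ j ∈ T, if i < j then x i * x j else 0) ≤ 0 := by
  have hsq : ∀ A : Finset (Fin n), ∑ i ∈ A, x i * x i = ∑ i ∈ A, x i := by
    intro A
    refine Finset.sum_congr rfl fun i _ => ?_
    rcases hx i with h | h <;> simp [h]
  have hS2 := sq_sum_aux n x S
  have hT2 := sq_sum_aux n x T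
  rw [hsq] at hS2 hT2
  have hcross : (∑ i ∈ S, ∑ j ∈ T, x i * x j) = (∑ i ∈ S, x i) * (∑ j ∈ T, x j) := by
    rw [Finset.sum_mul_sum]
  set a := ∑ i ∈ S, x i with ha
  set b := ∑ i ∈ T, x i with hb
  have hkey : 0 ≤ (a - b)^2 + (a - b) := by
    rw [sum_card_aux n x hx S] at ha
    rw [sum_card_aux n x hx T] at hb
    set p := (S.filter (fun i => x i = 1)).card
    set q := (T.filter (fun i => x i = 1)).card
    have hz : a - b = (((p : ℤ) - q : ℤ) : ℝ) := by rw [ha, hb]; push_cast; ring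
    rw [hz]
    have : (0 : ℤ) ≤ ((p:ℤ) - q)^2 + ((p:ℤ) - q) := by
      set z := (p : ℤ) - q
      rcases le_or_gt 0 z with h | h
      · positivity
      · nlinarith
    have h' : (0:ℝ) ≤ ((((p:ℤ) - q)^2 + ((p:ℤ) - q) : ℤ) : ℝ) := by exact_mod_cast this
    push_cast at h' ⊢
    linarith
  nlinarith [hS2, hT2, hcross, hkey]
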